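/- Let T be a regular tournament of order 2n+1 with n ≥ 3, let S ⊆ V(T) with |S| ≤ (n−1)/3, and let x, y be distinct vertices of V(T) \ S. Then T − S contains a directed (x,y)-path of length 3, unless T is isomorphic to a tournament from the family 𝒢. -/

import Mathlib

variable {V : Type*}

/-- A tournament: irreflexive, and between any two distinct vertices exactly one arc. -/
def IsTournament (T : V → V → Prop) : Prop :=
  (∀ v, ¬ T v v) ∧ ∀ x y : V, x ≠ y → (T x y ↔ ¬ T y x)

/-- Outdegree of a vertex. -/
noncomputable def outdeg (T : V → V → Prop) (x : V) : ℕ := Nat.card {y : V // T x y}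

/-- Indegree of a vertex. -/
noncomputable def indeg (T : V → V → Prop) (x : V) : ℕ := Nat.card {y : V // T y x}

/-- A tournament is regular if outdegree equals indegree at every vertex. -/
def RegularTournament (T : V → V → Prop) : Prop := ∀ v : V, outdeg T v = indeg T v

/-- There is a directed path of length `k` from `x` to `y` all of whose vertices lie in `D`. -/
def HasPathOn (T : V → V → Prop) (D : Set V) (x y : V) (k : ℕ) : Prop :=
  ∃ f : Fin (k+1) → V, Function.Injective f ∧ f 0 = x ∧ f (Fin.last k) = y ∧
    (∀ i, f i ∈ D) ∧ ∀ i : Fin k, T (f i.castSucc) (f i.succ)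

/-- Every vertex of X dominates every vertex of Y. -/
def Dom (T : V → V → Prop) (X Y : Set V) : Prop := ∀ a ∈ X, ∀ b ∈ Y, T a b

/-- Outdegree within the induced subtournament on `D`. -/
noncomputable def outdegOn (T : V → V → Prop) (D : Set V) (v : V) : ℕ :=
  Nat.card {u : V // u ∈ D ∧ T v u}

/-- Indegree within the induced subtournament on `D`. -/
noncomputable def indegOn (T : V → V → Prop) (D : Set V) (v : V) : ℕ :=
  Nat.card {u : V // u ∈ D ∧ T u v}

/-- The induced subtournament on `D` is regular. -/
def RegularOn (T : V → V → Prop) (D : Set V) : Prop :=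
  ∀ v ∈ D, outdegOn T D v = indegOn T D v

/-- `T` (with distinguished vertices x, y and set S) is a member of the family 𝒢:
a regular tournament of order 6k+3 ≥ 9 with vertex set {x,y,z} ∪ A ∪ B ∪ C ∪ S,
|A| = |C| = 2k−1, |B| = k+2, |S| = k, the subtournaments induced by A, C and
{z} ∪ B ∪ S regular, and A→(B∪S)→C, C→A, C→z→A, x→({y,z}∪A∪S),
({x,z}∪C∪S)→y, y→(A∪B), (B∪C)→x. -/
def FamilyGData (T : V → V → Prop) (x y : V) (S : Set V) : Prop :=
  IsTournament T ∧ RegularTournament T ∧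
  ∃ (k : ℕ) (z : V) (A B C : Set V),
    1 ≤ k ∧ Nat.card V = 6 * k + 3 ∧
    A.ncard = 2 * k - 1 ∧ C.ncard = 2 * k - 1 ∧ B.ncard = k + 2 ∧ S.ncard = k ∧
    x ≠ y ∧ x ≠ z ∧ y ≠ z ∧
    ({x, y, z} ∪ A ∪ B ∪ C ∪ S : Set V) = Set.univ ∧
    List.Pairwise Disjoint [({x, y, z} : Set V), A, B, C, S] ∧
    RegularOn T A ∧ RegularOn T C ∧ RegularOn T ({z} ∪ B ∪ S) ∧
    Dom T A (B ∪ S) ∧ Dom T (B ∪ S) C ∧ Dom T C A ∧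
    Dom T C {z} ∧ Dom T {z} A ∧
    Dom T {x} ({y, z} ∪ A ∪ S) ∧ Dom T ({x, z} ∪ C ∪ S) {y} ∧
    Dom T {y} (A ∪ B) ∧ Dom T (B ∪ C) {x}


open scoped Classical
open Finset

section helpers
variable {V : Type*} [Fintype V] {T : V → V → Prop}

lemma outdeg_eq_filter (T : V → V → Prop) (v : V) :
    outdeg T v = (Finset.univ.filter (fun u => T v u)).card := by
  rw [outdeg, Nat.card_eq_fintype_card, Fintype.card_subtype]

lemma indeg_eq_filter (T : V → V → Prop) (v : V) :
    indeg T v = (Finset.univ.filter (fun u => T u v)).card := by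
  rw [indeg, Nat.card_eq_fintype_card, Fintype.card_subtype]

lemma outdegOn_eq_filter (T : V → V → Prop) (D : Finset V) (v : V) :
    outdegOn T ↑D v = (D.filter (fun u => T v u)).card := by
  rw [outdegOn, Nat.card_eq_fintype_card, Fintype.card_subtype]
  congr 1
  ext u
  simp [and_comm]

lemma indegOn_eq_filter (T : V → V → Prop) (D : Finset V) (v : V) :
    indegOn T ↑D v = (D.filter (fun u => T u v)).card := by
  rw [indegOn, Nat.card_eq_fintype_card, Fintype.card_subtype]
  congr 1
  ext u
  simp [and_comm]

/-- In a tournament, the out- and in-neighbourhoods inside a finset `D` of a vertex `v ∈ D`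
partition `D \ {v}`. -/
lemma filter_out_in_card (hT : IsTournament T) (D : Finset V) {v : V} (hv : v ∈ D) :
    (D.filter (fun u => T v u)).card + (D.filter (fun u => T u v)).card = D.card - 1 := by
  have hdisj : Disjoint (D.filter (fun u => T v u)) (D.filter (fun u => T u v)) := by
    rw [Finset.disjoint_left]
    intro a ha hb
    simp only [mem_filter] at ha hb
    have hne : v ≠ a := by rintro rfl; exact hT.1 v ha.2
    exact ((hT.2 v a hne).1 ha.2) hb.2
  have hunion : D.filter (fun u => T v u) ∪ D.filter (fun u => T u v) = D.erase v := by
    ext a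
    simp only [mem_union, mem_filter, mem_erase]
    constructor
    · rintro (⟨h1, h2⟩ | ⟨h1, h2⟩)
      · exact ⟨fun h => hT.1 v (h ▸ h2), h1⟩
      · exact ⟨fun h => hT.1 v (h ▸ h2), h1⟩
    · rintro ⟨hne, ha⟩
      by_cases h : T v a
      · exact Or.inl ⟨ha, h⟩
      · exact Or.inr ⟨ha, ((hT.2 v a (Ne.symm hne)).not_left.mp h : _)⟩
  have := Finset.card_union_of_disjoint hdisj
  rw [hunion, Finset.card_erase_of_mem hv] at this
  omega

end helpers

section helpers2
set_option linter.unusedSectionVars false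
variable {V : Type*} [Fintype V] {T : V → V → Prop}

/-- Double counting internal arcs of a tournament restricted to `A`. -/
lemma sum_internal (hT : IsTournament T) (A : Finset V) :
    2 * ∑ a ∈ A, (A.filter (fun u => T a u)).card = A.card * (A.card - 1) := by
  have hswap : ∑ a ∈ A, (A.filter (fun u => T a u)).card
      = ∑ a ∈ A, (A.filter (fun u => T u a)).card := by
    have h1 : ∀ (P : V → V → Prop), ∑ a ∈ A, (A.filter (fun u => P a u)).card
        = ∑ a ∈ A, ∑ u ∈ A, if P a u then 1 else 0 := by
      intro P
      refine Finset.sum_congr rfl fun a _ => ?_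
      rw [Finset.card_filter]
    rw [h1, h1]
    rw [Finset.sum_comm]
  have hsum : ∑ a ∈ A, ((A.filter (fun u => T a u)).card + (A.filter (fun u => T u a)).card)
      = A.card * (A.card - 1) := by
    have : ∀ a ∈ A, (A.filter (fun u => T a u)).card + (A.filter (fun u => T u a)).card
        = A.card - 1 := fun a ha => filter_out_in_card hT A ha
    rw [Finset.sum_congr rfl this, Finset.sum_const, smul_eq_mul]
  rw [Finset.sum_add_distrib, ← hswap] at hsum
  omega

lemma all_eq_of_sum_eq {α : Type*} (s : Finset α) (f : α → ℕ) (c : ℕ)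
    (hle : ∀ a ∈ s, f a ≤ c) (hsum : s.card * c ≤ ∑ a ∈ s, f a) :
    ∀ a ∈ s, f a = c := by
  by_contra h
  push_neg at h
  obtain ⟨a, ha, hne⟩ := h
  have hlt : f a < c := lt_of_le_of_ne (hle a ha) hne
  have : ∑ b ∈ s, f b < ∑ b ∈ s, c :=
    Finset.sum_lt_sum (fun b hb => hle b hb) ⟨a, ha, hlt⟩
  rw [Finset.sum_const, smul_eq_mul] at this
  omega

end helpers2

lemma split_filter {V : Type*} [Fintype V] (D : Finset V) (P : V → Prop) :
    (Finset.univ.filter P).card = (D.filter P).card + ((Finset.univ \ D).filter P).card := by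
  classical
  rw [← Finset.card_union_of_disjoint, ← Finset.filter_union,
    Finset.union_sdiff_of_subset (Finset.subset_univ D)]
  exact Finset.disjoint_filter_filter Finset.sdiff_disjoint.symm

lemma hasPath3 {V : Type*} (T : V → V → Prop) (D : Set V) {x a b y : V}
    (hx : x ∈ D) (ha : a ∈ D) (hb : b ∈ D) (hy : y ∈ D)
    (hxa : T x a) (hab : T a b) (hby : T b y)
    (h1 : x ≠ a) (h2 : x ≠ b) (h3 : x ≠ y) (h4 : a ≠ b) (h5 : a ≠ y) (h6 : b ≠ y) :
    HasPathOn T D x y 3 := by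
  refine ⟨![x, a, b, y], ?_, ?_, ?_, ?_, ?_⟩
  · intro i j hij
    fin_cases i <;> fin_cases j <;> simp_all <;> exact absurd hij.symm (by assumption)
  · rfl
  · rfl
  · intro i; fin_cases i <;> simpa
  · intro i; fin_cases i <;> simpa using ‹_›

set_option maxHeartbeats 1000000 in
theorem stmt15 {V : Type*} [Fintype V] (T : V → V → Prop)
    (hT : IsTournament T) (hreg : RegularTournament T) (n : ℕ) (hn : 3 ≤ n)
    (hcard : Fintype.card V = 2 * n + 1) (S : Set V) (hS : 3 * S.ncard + 1 ≤ n)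
    (x y : V) (hxy : x ≠ y) (hxS : x ∉ S) (hyS : y ∉ S) :
    HasPathOn T {v | v ∉ S} x y 3 ∨
      ∃ (x' y' : V) (S' : Set V), FamilyGData T x' y' S' := by
  classical
  by_cases hpath : HasPathOn T {v | v ∉ S} x y 3
  · exact Or.inl hpath
  right
  -- basic tournament facts
  have hirr : ∀ v, ¬ T v v := hT.1
  have htot : ∀ a b : V, a ≠ b → ¬ T a b → T b a := by
    intro a b hne hab
    exact ((hT.2 b a hne.symm).2 hab : _)
  have hasym : ∀ a b : V, T a b → ¬ T b a := by
    intro a b hab hba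
    rcases eq_or_ne a b with rfl | hne
    · exact hirr a hab
    · exact (hT.2 a b hne).1 hab hba
  -- Finset setup
  set sF : Finset V := S.toFinset with hsFdef
  have hmemS : ∀ u, u ∈ sF ↔ u ∈ S := by simp [hsFdef]
  have hScard : S.ncard = sF.card := Set.ncard_eq_toFinset_card' S
  set XF : Finset V := Finset.univ.filter (fun v => T x v ∧ v ∉ S ∧ v ≠ y) with hXFdef
  set YF : Finset V := Finset.univ.filter (fun v => T v y ∧ v ∉ S ∧ v ≠ x) with hYFdef
  have hmemX : ∀ u, u ∈ XF ↔ (T x u ∧ u ∉ S ∧ u ≠ y) := by simp [hXFdef]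
  have hmemY : ∀ u, u ∈ YF ↔ (T u y ∧ u ∉ S ∧ u ≠ x) := by simp [hYFdef]
  set WF : Finset V := Finset.univ \ (XF ∪ YF ∪ sF ∪ {x, y}) with hWFdef
  have hmemW : ∀ u, u ∈ WF ↔ (u ∉ XF ∧ u ∉ YF ∧ u ∉ S ∧ u ≠ x ∧ u ≠ y) := by
    intro u
    simp [hWFdef, hmemS, not_or]
    tauto
  set AF : Finset V := XF \ YF with hAFdef
  set CF : Finset V := YF \ XF with hCFdef
  have hmemA : ∀ u, u ∈ AF ↔ (u ∈ XF ∧ u ∉ YF) := by simp [hAFdef]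
  have hmemC : ∀ u, u ∈ CF ↔ (u ∈ YF ∧ u ∉ XF) := by simp [hCFdef]
  -- the key consequence of having no path
  have hrule : ∀ a ∈ XF, ∀ b ∈ YF, a ≠ b → T b a := by
    intro a ha b hb hne
    rw [hmemX] at ha
    rw [hmemY] at hb
    refine htot a b hne fun hab => hpath ?_
    have hax : x ≠ a := fun h => hirr x (h ▸ ha.1)
    have hby' : b ≠ y := fun h => hirr y (h ▸ hb.1)
    exact hasPath3 T _ hxS ha.2.1 hb.2.1 hyS ha.1 hab hb.1
      hax hb.2.2.symm hxy hne ha.2.2 hby'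
  -- degrees
  have houtn : ∀ v, (Finset.univ.filter (fun u => T v u)).card = n := by
    intro v
    have h1 := filter_out_in_card hT Finset.univ (Finset.mem_univ v)
    have h2 := hreg v
    rw [outdeg_eq_filter, indeg_eq_filter] at h2
    rw [Finset.card_univ, hcard] at h1
    omega
  have hinn : ∀ v, (Finset.univ.filter (fun u => T u v)).card = n := by
    intro v
    have h1 := filter_out_in_card hT Finset.univ (Finset.mem_univ v)
    have h2 := hreg v
    rw [outdeg_eq_filter, indeg_eq_filter] at h2
    rw [Finset.card_univ, hcard] at h1
    omega
  -- x's out-neighbourhood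
  have hXsub : Finset.univ.filter (fun u => T x u) ⊆ XF ∪ sF ∪ {y} := by
    intro u hu
    simp only [Finset.mem_filter, Finset.mem_univ, true_and] at hu
    simp only [Finset.mem_union, Finset.mem_singleton, hmemX, hmemS]
    by_cases h1 : u ∈ S
    · tauto
    · by_cases h2 : u = y <;> tauto
  have hYsub : Finset.univ.filter (fun u => T u y) ⊆ YF ∪ sF ∪ {x} := by
    intro u hu
    simp only [Finset.mem_filter, Finset.mem_univ, true_and] at hu
    simp only [Finset.mem_union, Finset.mem_singleton, hmemY, hmemS]
    by_cases h1 : u ∈ S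
    · tauto
    · by_cases h2 : u = x <;> tauto
  have hXn : n ≤ XF.card + sF.card + 1 := by
    have := Finset.card_le_card hXsub
    rw [houtn] at this
    calc n ≤ (XF ∪ sF ∪ {y}).card := this
      _ ≤ (XF ∪ sF).card + 1 := by
          simpa using Finset.card_union_le (XF ∪ sF) {y}
      _ ≤ XF.card + sF.card + 1 := by
          have := Finset.card_union_le XF sF; omega
  have hYn : n ≤ YF.card + sF.card + 1 := by
    have := Finset.card_le_card hYsub
    rw [hinn] at this
    calc n ≤ (YF ∪ sF ∪ {x}).card := this
      _ ≤ (YF ∪ sF).card + 1 := by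
          simpa using Finset.card_union_le (YF ∪ sF) {x}
      _ ≤ YF.card + sF.card + 1 := by
          have := Finset.card_union_le YF sF; omega
  -- |X ∩ Y| ≤ 1
  have hZle : (XF ∩ YF).card ≤ 1 := by
    rw [Finset.card_le_one]
    intro a ha b hb
    rw [Finset.mem_inter] at ha hb
    by_contra hne
    exact hasym a b (hrule b hb.1 a ha.2 (Ne.symm hne)) (hrule a ha.1 b hb.2 hne)
  -- disjointness facts
  have hdisjAS : ∀ u, u ∈ AF → u ∈ sF ∪ WF → False := by
    intro u hu h2
    rw [hmemA] at hu
    rcases Finset.mem_union.mp h2 with h | h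
    · exact ((hmemX u).mp hu.1).2.1 ((hmemS u).mp h)
    · exact ((hmemW u).mp h).1 hu.1
  have hdisjCS : ∀ u, u ∈ CF → u ∈ sF ∪ WF → False := by
    intro u hu h2
    rw [hmemC] at hu
    rcases Finset.mem_union.mp h2 with h | h
    · exact ((hmemY u).mp hu.1).2.1 ((hmemS u).mp h)
    · exact ((hmemW u).mp h).2.1 hu.1
  -- out-neighbourhoods of A-vertices are confined
  have hAconf : ∀ a ∈ AF, ∀ u, T a u → (u ∈ AF ∨ u ∈ sF ∪ WF) := by
    intro a ha u hu
    have ha' := ha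
    rw [hmemA] at ha'
    obtain ⟨haX, haY⟩ := ha'
    rw [hmemX] at haX
    by_cases huS : u ∈ S
    · exact Or.inr (Finset.mem_union_left _ ((hmemS u).mpr huS))
    have hux : u ≠ x := fun h => hasym x a haX.1 (h ▸ hu)
    have huy : u ≠ y := fun h =>
      haY ((hmemY a).mpr ⟨h ▸ hu, haX.2.1, fun h2 => hirr x (h2 ▸ haX.1)⟩)
    have huY : u ∉ YF := by
      intro huY
      have hne : a ≠ u := fun h => hirr a (h ▸ hu)
      exact hasym a u hu (hrule a ((hmemX a).mpr haX) u huY hne)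
    by_cases huX : u ∈ XF
    · exact Or.inl ((hmemA u).mpr ⟨huX, huY⟩)
    · exact Or.inr (Finset.mem_union_right _ ((hmemW u).mpr ⟨huX, huY, huS, hux, huy⟩))
  -- in-neighbourhoods of C-vertices are confined
  have hCconf : ∀ b ∈ CF, ∀ u, T u b → (u ∈ CF ∨ u ∈ sF ∪ WF) := by
    intro b hb u hu
    have hb' := hb
    rw [hmemC] at hb'
    obtain ⟨hbY, hbX⟩ := hb'
    rw [hmemY] at hbY
    by_cases huS : u ∈ S
    · exact Or.inr (Finset.mem_union_left _ ((hmemS u).mpr huS))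
    have huy : u ≠ y := fun h => hasym b y hbY.1 (h ▸ hu)
    have hux : u ≠ x := fun h =>
      hbX ((hmemX b).mpr ⟨h ▸ hu, hbY.2.1, fun h2 => hirr y (h2 ▸ hbY.1)⟩)
    have huX : u ∉ XF := by
      intro huX
      have hne : u ≠ b := fun h => hirr u (h ▸ hu)
      exact hasym u b hu (hrule u huX b ((hmemY b).mpr hbY) hne)
    by_cases huY : u ∈ YF
    · exact Or.inl ((hmemC u).mpr ⟨huY, huX⟩)
    · exact Or.inr (Finset.mem_union_right _ ((hmemW u).mpr ⟨huX, huY, huS, hux, huy⟩))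
  -- split the out-degree of an A-vertex
  have hAsplit : ∀ a ∈ AF, n = (AF.filter (fun u => T a u)).card
      + ((sF ∪ WF).filter (fun u => T a u)).card := by
    intro a ha
    rw [← houtn a]
    have hdisj : Disjoint (AF.filter (fun u => T a u)) ((sF ∪ WF).filter (fun u => T a u)) := by
      rw [Finset.disjoint_left]
      intro u h1 h2
      exact hdisjAS u (Finset.mem_filter.mp h1).1 (Finset.mem_filter.mp h2).1
    rw [← Finset.card_union_of_disjoint hdisj]
    congr 1
    ext u
    simp only [Finset.mem_filter, Finset.mem_univ, true_and, Finset.mem_union]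
    constructor
    · intro hu
      rcases hAconf a ha u hu with h | h
      · exact Or.inl ⟨h, hu⟩
      · exact Or.inr ⟨Finset.mem_union.mp h, hu⟩
    · rintro (⟨_, h⟩ | ⟨_, h⟩) <;> exact h
  have hCsplit : ∀ b ∈ CF, n = (CF.filter (fun u => T u b)).card
      + ((sF ∪ WF).filter (fun u => T u b)).card := by
    intro b hb
    rw [← hinn b]
    have hdisj : Disjoint (CF.filter (fun u => T u b)) ((sF ∪ WF).filter (fun u => T u b)) := by
      rw [Finset.disjoint_left]
      intro u h1 h2
      exact hdisjCS u (Finset.mem_filter.mp h1).1 (Finset.mem_filter.mp h2).1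
    rw [← Finset.card_union_of_disjoint hdisj]
    congr 1
    ext u
    simp only [Finset.mem_filter, Finset.mem_univ, true_and, Finset.mem_union]
    constructor
    · intro hu
      rcases hCconf b hb u hu with h | h
      · exact Or.inl ⟨h, hu⟩
      · exact Or.inr ⟨Finset.mem_union.mp h, hu⟩
    · rintro (⟨_, h⟩ | ⟨_, h⟩) <;> exact h
  -- disjointness of sF and WF, and cardinality of sF ∪ WF
  have hdisjSW : Disjoint sF WF := by
    rw [Finset.disjoint_left]
    intro u h1 h2
    exact ((hmemW u).mp h2).2.2.1 ((hmemS u).mp h1)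
  have hSWcard : (sF ∪ WF).card = sF.card + WF.card := Finset.card_union_of_disjoint hdisjSW
  -- sums over AF and CF
  set EA : ℕ := ∑ a ∈ AF, (AF.filter (fun u => T a u)).card with hEAdef
  set GA : ℕ := ∑ a ∈ AF, ((sF ∪ WF).filter (fun u => T a u)).card with hGAdef
  set EC : ℕ := ∑ b ∈ CF, (CF.filter (fun u => T u b)).card with hECdef
  set GC : ℕ := ∑ b ∈ CF, ((sF ∪ WF).filter (fun u => T u b)).card with hGCdef
  have hEA : 2 * EA = AF.card * (AF.card - 1) := sum_internal hT AF
  have hEC : 2 * EC = CF.card * (CF.card - 1) := by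
    have hT' : IsTournament (fun a b => T b a) := by
      refine ⟨hT.1, fun a b hne => ?_⟩
      have h1 := hT.2 b a hne.symm
      have h2 : b ≠ a := hne.symm
      simp only []
      constructor
      · intro hba hab
        exact hasym a b hab hba
      · intro h
        exact htot a b hne h
    exact sum_internal hT' CF
  have hAN : AF.card * n = EA + GA := by
    rw [hEAdef, hGAdef, ← Finset.sum_add_distrib]
    rw [Finset.sum_congr rfl (fun a ha => (hAsplit a ha).symm), Finset.sum_const, smul_eq_mul]
  have hCN : CF.card * n = EC + GC := by
    rw [hECdef, hGCdef, ← Finset.sum_add_distrib]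
    rw [Finset.sum_congr rfl (fun b hb => (hCsplit b hb).symm), Finset.sum_const, smul_eq_mul]
  have hGAle : GA ≤ AF.card * (sF.card + WF.card) := by
    rw [hGAdef]
    calc ∑ a ∈ AF, ((sF ∪ WF).filter (fun u => T a u)).card
        ≤ ∑ _a ∈ AF, (sF.card + WF.card) :=
          Finset.sum_le_sum fun a _ => le_trans (Finset.card_filter_le _ _) hSWcard.le
      _ = AF.card * (sF.card + WF.card) := by rw [Finset.sum_const, smul_eq_mul]
  have hGCle : GC ≤ CF.card * (sF.card + WF.card) := by
    rw [hGCdef]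
    calc ∑ b ∈ CF, ((sF ∪ WF).filter (fun u => T u b)).card
        ≤ ∑ _b ∈ CF, (sF.card + WF.card) :=
          Finset.sum_le_sum fun b _ => le_trans (Finset.card_filter_le _ _) hSWcard.le
      _ = CF.card * (sF.card + WF.card) := by rw [Finset.sum_const, smul_eq_mul]
  -- global partition of the vertex set
  have hxX : x ∉ XF := fun h => hirr x ((hmemX x).mp h).1
  have hxY : x ∉ YF := fun h => ((hmemY x).mp h).2.2 rfl
  have hyX : y ∉ XF := fun h => ((hmemX y).mp h).2.2 rfl
  have hyY : y ∉ YF := fun h => hirr y ((hmemY y).mp h).1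
  have hTot : 2 * n + 1 = (XF ∪ YF).card + sF.card + WF.card + 2 := by
    have hWcard : WF.card + (XF ∪ YF ∪ sF ∪ {x, y}).card = Fintype.card V := by
      rw [hWFdef, Finset.card_sdiff_of_subset (Finset.subset_univ _), Finset.card_univ]
      have := Finset.card_le_card (Finset.subset_univ (XF ∪ YF ∪ sF ∪ {x, y}))
      rw [Finset.card_univ] at this
      omega
    have hd1 : Disjoint (XF ∪ YF) sF := by
      rw [Finset.disjoint_left]
      intro u h1 h2
      rcases Finset.mem_union.mp h1 with h | h
      · exact ((hmemX u).mp h).2.1 ((hmemS u).mp h2)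
      · exact ((hmemY u).mp h).2.1 ((hmemS u).mp h2)
    have hd2 : Disjoint (XF ∪ YF ∪ sF) ({x, y} : Finset V) := by
      rw [Finset.disjoint_right]
      intro u h2 h1
      rcases Finset.mem_insert.mp h2 with rfl | h2'
      · rcases Finset.mem_union.mp h1 with h | h
        · rcases Finset.mem_union.mp h with h' | h'
          · exact hxX h'
          · exact hxY h'
        · exact hxS ((hmemS u).mp h)
      · rw [Finset.mem_singleton] at h2'
        subst h2'
        rcases Finset.mem_union.mp h1 with h | h
        · rcases Finset.mem_union.mp h with h' | h'
          · exact hyX h'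
          · exact hyY h'
        · exact hyS ((hmemS u).mp h)
    rw [Finset.card_union_of_disjoint hd2, Finset.card_union_of_disjoint hd1] at hWcard
    have hxy2 : ({x, y} : Finset V).card = 2 := by
      rw [Finset.card_insert_of_notMem (by simpa using hxy), Finset.card_singleton]
    rw [hxy2, hcard] at hWcard
    omega
  have hXY : XF.card + YF.card = (XF ∪ YF).card + (XF ∩ YF).card :=
    (Finset.card_union_add_card_inter XF YF).symm
  have hAZ : (XF ∩ YF).card + AF.card = XF.card := Finset.card_inter_add_card_sdiff XF YF
  have hCZ : (XF ∩ YF).card + CF.card = YF.card := by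
    rw [Finset.inter_comm]
    exact Finset.card_inter_add_card_sdiff YF XF
  have hS' : 3 * sF.card + 1 ≤ n := by rw [← hScard]; exact hS
  -- A and C are nonempty
  have hAge1 : 1 ≤ AF.card := by omega
  have hCge1 : 1 ≤ CF.card := by omega
  -- linearised inequalities
  have hlinA : 2 * n ≤ (AF.card - 1) + 2 * (sF.card + WF.card) := by
    have h1 : AF.card * (2 * n) ≤ AF.card * ((AF.card - 1) + 2 * (sF.card + WF.card)) := by
      have e1 : AF.card * (2 * n) = 2 * (EA + GA) := by rw [← hAN]; ring
      have e2 : AF.card * ((AF.card - 1) + 2 * (sF.card + WF.card))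
          = AF.card * (AF.card - 1) + 2 * (AF.card * (sF.card + WF.card)) := by ring
      rw [e1, e2, ← hEA]
      linarith [hGAle]
    exact Nat.le_of_mul_le_mul_left h1 hAge1
  have hlinC : 2 * n ≤ (CF.card - 1) + 2 * (sF.card + WF.card) := by
    have h1 : CF.card * (2 * n) ≤ CF.card * ((CF.card - 1) + 2 * (sF.card + WF.card)) := by
      have e1 : CF.card * (2 * n) = 2 * (EC + GC) := by rw [← hCN]; ring
      have e2 : CF.card * ((CF.card - 1) + 2 * (sF.card + WF.card))
          = CF.card * (CF.card - 1) + 2 * (CF.card * (sF.card + WF.card)) := by ring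
      rw [e1, e2, ← hEC]
      linarith [hGCle]
    exact Nat.le_of_mul_le_mul_left h1 hCge1
  -- exact values
  set k : ℕ := sF.card with hkdef
  have hk1 : 1 ≤ k := by omega
  have hneq : n = 3 * k + 1 := by omega
  have hZ1 : (XF ∩ YF).card = 1 := by omega
  have hX2 : XF.card = 2 * k := by omega
  have hY2 : YF.card = 2 * k := by omega
  have hA2 : AF.card = 2 * k - 1 := by omega
  have hC2 : CF.card = 2 * k - 1 := by omega
  have hW2 : WF.card = k + 2 := by omega
  -- equality in the A-sum: every a ∈ A dominates all of sF ∪ WF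
  have hGAeq : AF.card * (sF.card + WF.card) ≤ GA := by
    have h1 : 2 * (sF.card + WF.card) + (AF.card - 1) ≤ 2 * n := by omega
    have e1 : AF.card * (2 * (sF.card + WF.card) + (AF.card - 1))
        = 2 * (AF.card * (sF.card + WF.card)) + AF.card * (AF.card - 1) := by ring
    have e2 : AF.card * (2 * n) = 2 * (EA + GA) := by rw [← hAN]; ring
    have h2 := Nat.mul_le_mul_left AF.card h1
    rw [e1, e2, ← hEA] at h2
    linarith
  have hGCeq : CF.card * (sF.card + WF.card) ≤ GC := by
    have h1 : 2 * (sF.card + WF.card) + (CF.card - 1) ≤ 2 * n := by omega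
    have e1 : CF.card * (2 * (sF.card + WF.card) + (CF.card - 1))
        = 2 * (CF.card * (sF.card + WF.card)) + CF.card * (CF.card - 1) := by ring
    have e2 : CF.card * (2 * n) = 2 * (EC + GC) := by rw [← hCN]; ring
    have h2 := Nat.mul_le_mul_left CF.card h1
    rw [e1, e2, ← hEC] at h2
    linarith
  have hAdom : ∀ a ∈ AF, ∀ u ∈ sF ∪ WF, T a u := by
    have hall := all_eq_of_sum_eq AF (fun a => ((sF ∪ WF).filter (fun u => T a u)).card)
      (sF.card + WF.card)
      (fun a _ => le_trans (Finset.card_filter_le _ _) hSWcard.le) (by rw [← hGAdef]; exact hGAeq)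
    intro a ha u hu
    have h3 : ((sF ∪ WF).filter (fun u => T a u)).card = sF.card + WF.card := hall a ha
    have heq : (sF ∪ WF).filter (fun u => T a u) = sF ∪ WF := by
      apply Finset.eq_of_subset_of_card_le (Finset.filter_subset _ _)
      rw [h3, hSWcard]
    have : u ∈ (sF ∪ WF).filter (fun u => T a u) := heq.symm ▸ hu
    exact (Finset.mem_filter.mp this).2
  have hCdom : ∀ b ∈ CF, ∀ u ∈ sF ∪ WF, T u b := by
    have hall := all_eq_of_sum_eq CF (fun b => ((sF ∪ WF).filter (fun u => T u b)).card)
      (sF.card + WF.card)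
      (fun b _ => le_trans (Finset.card_filter_le _ _) hSWcard.le) (by rw [← hGCdef]; exact hGCeq)
    intro b hb u hu
    have h3 : ((sF ∪ WF).filter (fun u => T u b)).card = sF.card + WF.card := hall b hb
    have heq : (sF ∪ WF).filter (fun u => T u b) = sF ∪ WF := by
      apply Finset.eq_of_subset_of_card_le (Finset.filter_subset _ _)
      rw [h3, hSWcard]
    have : u ∈ (sF ∪ WF).filter (fun u => T u b) := heq.symm ▸ hu
    exact (Finset.mem_filter.mp this).2
  -- exact out-neighbourhood of x and in-neighbourhood of y
  have hxout : Finset.univ.filter (fun u => T x u) = XF ∪ sF ∪ {y} := by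
    apply Finset.eq_of_subset_of_card_le hXsub
    rw [houtn]
    calc (XF ∪ sF ∪ {y}).card ≤ (XF ∪ sF).card + 1 := by
          simpa using Finset.card_union_le (XF ∪ sF) {y}
      _ ≤ XF.card + sF.card + 1 := by have := Finset.card_union_le XF sF; omega
      _ ≤ n := by omega
  have hyin : Finset.univ.filter (fun u => T u y) = YF ∪ sF ∪ {x} := by
    apply Finset.eq_of_subset_of_card_le hYsub
    rw [hinn]
    calc (YF ∪ sF ∪ {x}).card ≤ (YF ∪ sF).card + 1 := by
          simpa using Finset.card_union_le (YF ∪ sF) {x}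
      _ ≤ YF.card + sF.card + 1 := by have := Finset.card_union_le YF sF; omega
      _ ≤ n := by omega
  have hxdom : ∀ u, u ∈ XF ∪ sF ∪ {y} → T x u := by
    intro u hu
    rw [← hxout] at hu
    exact (Finset.mem_filter.mp hu).2
  have hydom : ∀ u, u ∈ YF ∪ sF ∪ {x} → T u y := by
    intro u hu
    rw [← hyin] at hu
    exact (Finset.mem_filter.mp hu).2
  -- arcs into x and out of y determined
  have hintox : ∀ u, u ≠ x → u ∉ XF ∪ sF ∪ {y} → T u x := by
    intro u hux hu
    refine htot x u (fun h => hux h.symm) fun h => hu ?_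
    rw [← hxout]
    exact Finset.mem_filter.mpr ⟨Finset.mem_univ u, h⟩
  have houtofy : ∀ u, u ≠ y → u ∉ YF ∪ sF ∪ {x} → T y u := by
    intro u huy hu
    refine htot u y huy fun h => hu ?_
    rw [← hyin]
    exact Finset.mem_filter.mpr ⟨Finset.mem_univ u, h⟩
  -- the special vertex z
  obtain ⟨z, hz⟩ : ∃ z, XF ∩ YF = {z} := Finset.card_eq_one.mp hZ1
  have hzX : z ∈ XF := (Finset.mem_inter.mp (hz ▸ Finset.mem_singleton_self z)).1
  have hzY : z ∈ YF := (Finset.mem_inter.mp (hz ▸ Finset.mem_singleton_self z)).2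
  have hXmem' : ∀ u ∈ XF, u ∈ AF ∨ u = z := by
    intro u hu
    by_cases h : u ∈ YF
    · right
      have : u ∈ XF ∩ YF := Finset.mem_inter.mpr ⟨hu, h⟩
      rw [hz, Finset.mem_singleton] at this
      exact this
    · exact Or.inl ((hmemA u).mpr ⟨hu, h⟩)
  have hYmem' : ∀ u ∈ YF, u ∈ CF ∨ u = z := by
    intro u hu
    by_cases h : u ∈ XF
    · right
      have : u ∈ XF ∩ YF := Finset.mem_inter.mpr ⟨h, hu⟩
      rw [hz, Finset.mem_singleton] at this
      exact this
    · exact Or.inl ((hmemC u).mpr ⟨hu, h⟩)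
  have hcases : ∀ u : V, u = x ∨ u = y ∨ u = z ∨ u ∈ AF ∨ u ∈ CF ∨ u ∈ sF ∨ u ∈ WF := by
    intro u
    by_cases h1 : u = x; · exact Or.inl h1
    by_cases h2 : u = y; · exact Or.inr (Or.inl h2)
    by_cases h3 : u ∈ sF
    · exact Or.inr (Or.inr (Or.inr (Or.inr (Or.inr (Or.inl h3)))))
    by_cases h4 : u ∈ XF
    · rcases hXmem' u h4 with h | h
      · exact Or.inr (Or.inr (Or.inr (Or.inl h)))
      · exact Or.inr (Or.inr (Or.inl h))
    by_cases h5 : u ∈ YF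
    · rcases hYmem' u h5 with h | h
      · exact Or.inr (Or.inr (Or.inr (Or.inr (Or.inl h))))
      · exact Or.inr (Or.inr (Or.inl h))
    exact Or.inr (Or.inr (Or.inr (Or.inr (Or.inr (Or.inr
      ((hmemW u).mpr ⟨h4, h5, fun hS2 => h3 ((hmemS u).mpr hS2), h1, h2⟩))))))
  -- basic facts about z
  have hxz : T x z := ((hmemX z).mp hzX).1
  have hzy' : T z y := ((hmemY z).mp hzY).1
  have hzS : z ∉ S := ((hmemX z).mp hzX).2.1
  have hzx : x ≠ z := by intro h; rw [← h] at hxz; exact hirr x hxz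
  have hzy2 : y ≠ z := fun h => ((hmemX z).mp hzX).2.2 h.symm
  have hzA' : z ∉ AF := fun h => ((hmemA z).mp h).2 hzY
  have hzC' : z ∉ CF := fun h => ((hmemC z).mp h).2 hzX
  have hzW' : z ∉ WF := fun h => ((hmemW z).mp h).1 hzX
  -- various domination facts
  have hCA : ∀ b ∈ CF, ∀ a ∈ AF, T b a := by
    intro b hb a ha
    exact hrule a ((hmemA a).mp ha).1 b ((hmemC b).mp hb).1
      (fun h => ((hmemA a).mp ha).2 (h ▸ ((hmemC b).mp hb).1))
  have hCz : ∀ b ∈ CF, T b z := by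
    intro b hb
    exact hrule z hzX b ((hmemC b).mp hb).1 (fun h => ((hmemC b).mp hb).2 (h ▸ hzX))
  have hzA : ∀ a ∈ AF, T z a := by
    intro a ha
    exact hrule a ((hmemA a).mp ha).1 z hzY (fun h => ((hmemA a).mp ha).2 (h ▸ hzY))
  have hxA : ∀ a ∈ AF, T x a := fun a ha => ((hmemX a).mp ((hmemA a).mp ha).1).1
  have hxS2 : ∀ u ∈ sF, T x u := fun u hu =>
    hxdom u (Finset.mem_union_left _ (Finset.mem_union_right _ hu))
  have hxy3 : T x y := hxdom y (Finset.mem_union_right _ (Finset.mem_singleton_self y))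
  have hSy : ∀ u ∈ sF, T u y := fun u hu =>
    hydom u (Finset.mem_union_left _ (Finset.mem_union_right _ hu))
  have hCy : ∀ b ∈ CF, T b y := fun b hb => ((hmemY b).mp ((hmemC b).mp hb).1).1
  have hyA : ∀ a ∈ AF, T y a := by
    intro a ha
    have haA := (hmemA a).mp ha
    have haX := (hmemX a).mp haA.1
    refine houtofy a haX.2.2 ?_
    simp only [Finset.mem_union, Finset.mem_singleton]
    push_neg
    refine ⟨⟨haA.2, fun h => haX.2.1 ((hmemS a).mp h)⟩, fun h => hirr x (h ▸ haX.1)⟩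
  have hyW : ∀ u ∈ WF, T y u := by
    intro u hu
    have huW := (hmemW u).mp hu
    refine houtofy u huW.2.2.2.2 ?_
    simp only [Finset.mem_union, Finset.mem_singleton]
    push_neg
    exact ⟨⟨huW.2.1, fun h => huW.2.2.1 ((hmemS u).mp h)⟩, huW.2.2.2.1⟩
  have hWx : ∀ u ∈ WF, T u x := by
    intro u hu
    have huW := (hmemW u).mp hu
    refine hintox u huW.2.2.2.1 ?_
    simp only [Finset.mem_union, Finset.mem_singleton]
    push_neg
    exact ⟨⟨huW.1, fun h => huW.2.2.1 ((hmemS u).mp h)⟩, huW.2.2.2.2⟩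
  have hCx : ∀ b ∈ CF, T b x := by
    intro b hb
    have hbC := (hmemC b).mp hb
    have hbY := (hmemY b).mp hbC.1
    refine hintox b hbY.2.2 ?_
    simp only [Finset.mem_union, Finset.mem_singleton]
    push_neg
    exact ⟨⟨hbC.2, fun h => hbY.2.1 ((hmemS b).mp h)⟩, fun h => hirr y (h ▸ hbY.1)⟩
  -- membership exclusions for x and y
  have hxA' : x ∉ AF := fun h => hxX ((hmemA x).mp h).1
  have hxC' : x ∉ CF := fun h => hxY ((hmemC x).mp h).1
  have hxW' : x ∉ WF := fun h => ((hmemW x).mp h).2.2.2.1 rfl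
  have hyA2 : y ∉ AF := fun h => hyX ((hmemA y).mp h).1
  have hyC' : y ∉ CF := fun h => hyY ((hmemC y).mp h).1
  have hyW' : y ∉ WF := fun h => ((hmemW y).mp h).2.2.2.2 rfl
  -- regularity of A
  have hregA : RegularOn T ↑AF := by
    intro v hv
    have hv' : v ∈ AF := hv
    rw [outdegOn_eq_filter T AF v, indegOn_eq_filter T AF v]
    have h1 := hAsplit v hv'
    have h2 : (sF ∪ WF).filter (fun u => T v u) = sF ∪ WF :=
      Finset.filter_true_of_mem (fun u hu => hAdom v hv' u hu)
    rw [h2, hSWcard] at h1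
    have h3 := filter_out_in_card hT AF hv'
    omega
  have hregC : RegularOn T ↑CF := by
    intro v hv
    have hv' : v ∈ CF := hv
    rw [outdegOn_eq_filter T CF v, indegOn_eq_filter T CF v]
    have h1 := hCsplit v hv'
    have h2 : (sF ∪ WF).filter (fun u => T u v) = sF ∪ WF :=
      Finset.filter_true_of_mem (fun u hu => hCdom v hv' u hu)
    rw [h2, hSWcard] at h1
    have h3 := filter_out_in_card hT CF hv'
    omega
  -- the set {z} ∪ B ∪ S as a finset
  set DF : Finset V := insert z (WF ∪ sF) with hDFdef
  have hmemD : ∀ u, u ∈ DF ↔ (u = z ∨ u ∈ WF ∨ u ∈ sF) := by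
    intro u; simp [hDFdef]
  have hDcard : DF.card = 2 * k + 3 := by
    rw [hDFdef, Finset.card_insert_of_notMem, Finset.card_union_of_disjoint hdisjSW.symm]
    · omega
    · simp only [Finset.mem_union]
      push_neg
      exact ⟨hzW', fun h => hzS ((hmemS z).mp h)⟩
  have hDcoe : ({z} ∪ (↑WF : Set V) ∪ S : Set V) = ↑DF := by
    ext u
    simp only [Set.mem_union, Set.mem_singleton_iff, Finset.mem_coe, hmemD u, hmemS u]
    exact or_assoc
  have hregD : RegularOn T ({z} ∪ (↑WF : Set V) ∪ S) := by
    rw [hDcoe]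
    intro v hv
    have hv' : v ∈ DF := hv
    rw [outdegOn_eq_filter T DF v, indegOn_eq_filter T DF v]
    have hsplit := split_filter DF (fun u => T v u)
    rw [houtn v] at hsplit
    have h3 := filter_out_in_card hT DF hv'
    have hout2k : ((Finset.univ \ DF).filter (fun u => T v u)).card = 2 * k := by
      have hnotD : ∀ u, u ∈ Finset.univ \ DF ↔ (u ≠ z ∧ u ∉ WF ∧ u ∉ sF) := by
        intro u
        rw [Finset.mem_sdiff]
        simp only [Finset.mem_univ, true_and, hmemD u, not_or]
      rcases (hmemD v).mp hv' with hvz | hvW | hvS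
      · -- v = z : the outside out-neighbourhood is AF ∪ {y}
        subst v
        have : (Finset.univ \ DF).filter (fun u => T z u) = AF ∪ {y} := by
          ext u
          simp only [Finset.mem_filter, Finset.mem_union, Finset.mem_singleton, hnotD u]
          constructor
          · rintro ⟨⟨huz, huW, husF⟩, hTu⟩
            rcases hcases u with h1 | h2 | h3 | h | h | h | h
            · rw [h1] at hTu; exact absurd hTu (hasym x z hxz)
            · exact Or.inr h2
            · exact absurd h3 huz
            · exact Or.inl h
            · exact absurd hTu (hasym u z (hCz u h))
            · exact absurd h husF
            · exact absurd h huW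
          · rintro (h | h)
            · refine ⟨⟨fun he => hzA' (he ▸ h), fun he => hdisjAS u h
                (Finset.mem_union_right _ he), fun he => hdisjAS u h
                (Finset.mem_union_left _ he)⟩, hzA u h⟩
            · exact ⟨⟨fun he => hzy2 (h ▸ he), fun hw => hyW' (h ▸ hw),
                fun hs2 => hyS (h ▸ ((hmemS u).mp hs2))⟩, h.symm ▸ hzy'⟩
        rw [this, Finset.card_union_of_disjoint (Finset.disjoint_singleton_right.mpr hyA2), hA2, Finset.card_singleton]
        omega
      · -- v ∈ WF : the outside out-neighbourhood is CF ∪ {x}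
        have : (Finset.univ \ DF).filter (fun u => T v u) = CF ∪ {x} := by
          ext u
          simp only [Finset.mem_filter, Finset.mem_union, Finset.mem_singleton, hnotD u]
          constructor
          · rintro ⟨⟨huz, huW, husF⟩, hTu⟩
            rcases hcases u with h1 | h2 | h3 | h | h | h | h
            · exact Or.inr h1
            · rw [h2] at hTu; exact absurd hTu (hasym y v (hyW v hvW))
            · exact absurd h3 huz
            · exact absurd hTu (hasym u v (hAdom u h v (Finset.mem_union_right _ hvW)))
            · exact Or.inl h
            · exact absurd h husF
            · exact absurd h huW
          · rintro (h | h)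
            · refine ⟨⟨fun he => hzC' (he ▸ h), fun he => hdisjCS u h
                (Finset.mem_union_right _ he), fun he => hdisjCS u h
                (Finset.mem_union_left _ he)⟩, hCdom u h v (Finset.mem_union_right _ hvW)⟩
            · exact ⟨⟨fun he => hzx (h ▸ he), fun hw => hxW' (h ▸ hw),
                fun hs2 => hxS (h ▸ ((hmemS u).mp hs2))⟩, h.symm ▸ hWx v hvW⟩
        rw [this, Finset.card_union_of_disjoint (Finset.disjoint_singleton_right.mpr hxC'), hC2, Finset.card_singleton]
        omega
      · -- v ∈ sF : the outside out-neighbourhood is CF ∪ {y}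
        have : (Finset.univ \ DF).filter (fun u => T v u) = CF ∪ {y} := by
          ext u
          simp only [Finset.mem_filter, Finset.mem_union, Finset.mem_singleton, hnotD u]
          constructor
          · rintro ⟨⟨huz, huW, husF⟩, hTu⟩
            rcases hcases u with h1 | h2 | h3 | h | h | h | h
            · rw [h1] at hTu; exact absurd hTu (hasym x v (hxS2 v hvS))
            · exact Or.inr h2
            · exact absurd h3 huz
            · exact absurd hTu (hasym u v (hAdom u h v (Finset.mem_union_left _ hvS)))
            · exact Or.inl h
            · exact absurd h husF
            · exact absurd h huW
          · rintro (h | h)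
            · refine ⟨⟨fun he => hzC' (he ▸ h), fun he => hdisjCS u h
                (Finset.mem_union_right _ he), fun he => hdisjCS u h
                (Finset.mem_union_left _ he)⟩, hCdom u h v (Finset.mem_union_left _ hvS)⟩
            · exact ⟨⟨fun he => hzy2 (h ▸ he), fun hw => hyW' (h ▸ hw),
                fun hs2 => hyS (h ▸ ((hmemS u).mp hs2))⟩, h.symm ▸ hSy v hvS⟩
        rw [this, Finset.card_union_of_disjoint (Finset.disjoint_singleton_right.mpr hyC'), hC2, Finset.card_singleton]
        omega
    omega
  -- cover
  have hcover : ({x, y, z} ∪ ↑AF ∪ ↑WF ∪ ↑CF ∪ S : Set V) = Set.univ := by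
    ext u
    simp only [Set.mem_union, Set.mem_insert_iff, Set.mem_singleton_iff, Finset.mem_coe,
      Set.mem_univ, iff_true]
    rcases hcases u with h | h | h | h | h | h | h
    · exact Or.inl (Or.inl (Or.inl (Or.inl (Or.inl h))))
    · exact Or.inl (Or.inl (Or.inl (Or.inl (Or.inr (Or.inl h)))))
    · exact Or.inl (Or.inl (Or.inl (Or.inl (Or.inr (Or.inr h)))))
    · exact Or.inl (Or.inl (Or.inl (Or.inr h)))
    · exact Or.inl (Or.inr h)
    · exact Or.inr ((hmemS u).mp h)
    · exact Or.inl (Or.inl (Or.inr h))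
  -- pairwise disjointness
  have hxyzNot : ∀ a, (a = x ∨ a = y ∨ a = z) →
      a ∉ AF ∧ a ∉ WF ∧ a ∉ CF ∧ a ∉ S := by
    rintro a (h | h | h)
    · exact ⟨fun hb => hxA' (h ▸ hb), fun hb => hxW' (h ▸ hb),
        fun hb => hxC' (h ▸ hb), fun hb => hxS (h ▸ hb)⟩
    · exact ⟨fun hb => hyA2 (h ▸ hb), fun hb => hyW' (h ▸ hb),
        fun hb => hyC' (h ▸ hb), fun hb => hyS (h ▸ hb)⟩
    · exact ⟨fun hb => hzA' (h ▸ hb), fun hb => hzW' (h ▸ hb),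
        fun hb => hzC' (h ▸ hb), fun hb => hzS (h ▸ hb)⟩
  have hmemXYZ : ∀ a, a ∈ ({x, y, z} : Set V) → (a = x ∨ a = y ∨ a = z) := by
    intro a ha
    simpa using ha
  have hpw : List.Pairwise Disjoint [({x, y, z} : Set V), ↑AF, ↑WF, ↑CF, S] := by
    refine List.Pairwise.cons ?_ (List.Pairwise.cons ?_ (List.Pairwise.cons ?_
      (List.Pairwise.cons ?_ (List.Pairwise.cons
        (fun E hE => absurd hE List.not_mem_nil) List.Pairwise.nil))))
    · intro E hE
      simp only [List.mem_cons, List.not_mem_nil, or_false] at hE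
      rw [Set.disjoint_left]
      rcases hE with rfl | rfl | rfl | rfl
      · exact fun {a} ha hb => (hxyzNot a (hmemXYZ a ha)).1 hb
      · exact fun {a} ha hb => (hxyzNot a (hmemXYZ a ha)).2.1 hb
      · exact fun {a} ha hb => (hxyzNot a (hmemXYZ a ha)).2.2.1 hb
      · exact fun {a} ha hb => (hxyzNot a (hmemXYZ a ha)).2.2.2 hb
    · intro E hE
      simp only [List.mem_cons, List.not_mem_nil, or_false] at hE
      rw [Set.disjoint_left]
      rcases hE with rfl | rfl | rfl
      · exact fun {a} ha hb => hdisjAS a ha (Finset.mem_union_right _ hb)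
      · exact fun {a} ha hb => ((hmemC a).mp hb).2 ((hmemA a).mp ha).1
      · exact fun {a} ha hb => hdisjAS a ha (Finset.mem_union_left _ ((hmemS a).mpr hb))
    · intro E hE
      simp only [List.mem_cons, List.not_mem_nil, or_false] at hE
      rw [Set.disjoint_left]
      rcases hE with rfl | rfl
      · exact fun {a} ha hb => hdisjCS a hb (Finset.mem_union_right _ ha)
      · exact fun {a} ha hb => (Finset.disjoint_right.mp hdisjSW) ha ((hmemS a).mpr hb)
    · intro E hE
      simp only [List.mem_cons, List.not_mem_nil, or_false] at hE
      subst hE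
      rw [Set.disjoint_left]
      exact fun {a} ha hb => hdisjCS a ha (Finset.mem_union_left _ ((hmemS a).mpr hb))
  -- Dom facts (set versions)
  have hd1 : Dom T ↑AF (↑WF ∪ S) := by
    intro a ha b hb
    rcases hb with hb | hb
    · exact hAdom a ha b (Finset.mem_union_right _ hb)
    · exact hAdom a ha b (Finset.mem_union_left _ ((hmemS b).mpr hb))
  have hd2 : Dom T (↑WF ∪ S) ↑CF := by
    intro a ha b hb
    rcases ha with ha | ha
    · exact hCdom b hb a (Finset.mem_union_right _ ha)
    · exact hCdom b hb a (Finset.mem_union_left _ ((hmemS a).mpr ha))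
  have hd3 : Dom T ↑CF ↑AF := fun b hb a ha => hCA b hb a ha
  have hd4 : Dom T ↑CF {z} := by
    intro b hb w hw
    rw [Set.mem_singleton_iff] at hw
    rw [hw]
    exact hCz b hb
  have hd5 : Dom T {z} ↑AF := by
    intro w hw a ha
    rw [Set.mem_singleton_iff] at hw
    rw [hw]
    exact hzA a ha
  have hd6 : Dom T {x} ({y, z} ∪ ↑AF ∪ S) := by
    intro w hw b hb
    rw [Set.mem_singleton_iff] at hw
    rw [hw]
    rcases hb with (hb | hb) | hb
    · rcases hb with hb | hb
      · rw [hb]; exact hxy3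
      · rw [Set.mem_singleton_iff] at hb; rw [hb]; exact hxz
    · exact hxA b hb
    · exact hxS2 b ((hmemS b).mpr hb)
  have hd7 : Dom T ({x, z} ∪ ↑CF ∪ S) {y} := by
    intro a ha w hw
    rw [Set.mem_singleton_iff] at hw
    rw [hw]
    rcases ha with (ha | ha) | ha
    · rcases ha with ha | ha
      · rw [ha]; exact hxy3
      · rw [Set.mem_singleton_iff] at ha; rw [ha]; exact hzy'
    · exact hCy a ha
    · exact hSy a ((hmemS a).mpr ha)
  have hd8 : Dom T {y} (↑AF ∪ ↑WF) := by
    intro w hw b hb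
    rw [Set.mem_singleton_iff] at hw
    rw [hw]
    rcases hb with hb | hb
    · exact hyA b hb
    · exact hyW b hb
  have hd9 : Dom T (↑WF ∪ ↑CF) {x} := by
    intro a ha w hw
    rw [Set.mem_singleton_iff] at hw
    rw [hw]
    rcases ha with ha | ha
    · exact hWx a ha
    · exact hCx a ha
  refine ⟨x, y, S, hT, hreg, k, z, ↑AF, ↑WF, ↑CF, hk1, ?_, ?_, ?_, ?_, ?_,
    hxy, hzx, hzy2, hcover, hpw, hregA, hregC, hregD, hd1, hd2, hd3, hd4, hd5,
    hd6, hd7, hd8, hd9⟩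
  · rw [Nat.card_eq_fintype_card, hcard, hneq]; ring
  · rw [Set.ncard_coe_finset, hA2]
  · rw [Set.ncard_coe_finset, hC2]
  · rw [Set.ncard_coe_finset, hW2]
  · exact hScard
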